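/- If A has a differentiable boundary, then the orthogonal projection p_V onto a nonzero linear subspace V satisfies p_V(int_E(A)) = int_V(p_V(A)), where int_V denotes the interior relative to V. -/

import Mathlib

theorem projection_of_interior_eq_interior_of_projection
    {E : Type*} [NormedAddCommGroup E] [InnerProductSpace ℝ E] [FiniteDimensional ℝ E]
    (A : Set E) (hconv : Convex ℝ A) (hbdd : Bornology.IsBounded A)
    (h0 : (0 : E) ∈ interior A)
    (hC1 : ContDiffOn ℝ 1 (gauge A) {0}ᶜ)
    (V : Submodule ℝ E) (hV : V ≠ ⊥) :
    (V.orthogonalProjection) '' interior A = interior ((V.orthogonalProjection) '' A) := by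
  set f : E →L[ℝ] V := V.orthogonalProjection with hf
  have hsurj : Function.Surjective f := fun v =>
    ⟨(v : E), by simp [hf, Submodule.orthogonalProjection_mem_subspace_eq_self]⟩
  have hopen : IsOpenMap f := f.isOpenMap hsurj
  refine Set.Subset.antisymm (hopen.image_interior_subset A) ?_
  intro y hy
  -- (1+ε) • y ∈ interior (f '' A) for some ε > 0
  have hcont : Continuous fun t : ℝ => t • y := by continuity
  have h1 : (fun t : ℝ => t • y) 1 ∈ interior (f '' A) := by simpa using hy
  have := (hcont.tendsto 1).eventually (isOpen_interior.eventually_mem h1)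
  obtain ⟨ε, hε, hball⟩ := Metric.eventually_nhds_iff.mp this
  set t : ℝ := 1 + ε / 2 with ht
  have htpos : (0:ℝ) < t := by positivity
  have hz : t • y ∈ f '' A := by
    refine interior_subset (hball ?_)
    have : dist t 1 = ε / 2 := by
      rw [Real.dist_eq, ht]; rw [show (1:ℝ) + ε/2 - 1 = ε/2 by ring,
        abs_of_pos (by positivity : (0:ℝ) < ε/2)]
    rw [this]; linarith
  obtain ⟨x1, hx1A, hx1⟩ := hz
  set θ : ℝ := 1 - 1 / t with hθ
  have hθpos : 0 < θ := by
    rw [hθ]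
    have : 1 / t < 1 := by
      rw [div_lt_one htpos]; rw [ht]; linarith
    linarith
  have hsum : θ + 1 / t = 1 := by ring
  have hxmem : θ • (0:E) + (1 / t) • x1 ∈ interior A :=
    hconv.combo_interior_self_mem_interior h0 hx1A hθpos (by positivity) hsum
  refine ⟨θ • (0:E) + (1 / t) • x1, hxmem, ?_⟩
  have : f (θ • (0:E) + (1 / t) • x1) = (1 / t) • (t • y) := by
    rw [map_add, map_smul, map_smul, hx1]; simp
  rw [this, smul_smul, one_div_mul_cancel (ne_of_gt htpos), one_smul]
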